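/- Let N₁, N₂, …, N_L be D×D nonsingular integer matrices that are pairwise commutative and pairwise coprime. Then for any subset {i₁,…,i_p} ⊂ {1,…,L} with p ≥ 2, the product N_{i₁}N_{i₂}⋯N_{i_p} is both a least common right multiple and a least common left multiple of N_{i₁}, N_{i₂}, …, N_{i_p}. -/

import Mathlib

open Matrix

/-- An integer matrix is unimodular if its determinant is `1` or `-1`. -/
def Unimod {D : ℕ} (U : Matrix (Fin D) (Fin D) ℤ) : Prop := U.det = 1 ∨ U.det = -1

/-- `C` is a common right multiple (crm) of the family `M`. -/
def IsCRM {D n : ℕ} (M : Fin n → Matrix (Fin D) (Fin D) ℤ)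
    (C : Matrix (Fin D) (Fin D) ℤ) : Prop :=
  C.det ≠ 0 ∧ ∀ i, ∃ Q : Matrix (Fin D) (Fin D) ℤ, C = M i * Q

/-- `C` is a least common right multiple (lcrm) of the family `M`. -/
def IsLCRM {D n : ℕ} (M : Fin n → Matrix (Fin D) (Fin D) ℤ)
    (C : Matrix (Fin D) (Fin D) ℤ) : Prop :=
  IsCRM M C ∧ ∀ C', IsCRM M C' → ∃ P : Matrix (Fin D) (Fin D) ℤ, C' = C * P

/-- `C` is a common left multiple (clm) of the family `M`. -/
def IsCLM {D n : ℕ} (M : Fin n → Matrix (Fin D) (Fin D) ℤ)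
    (C : Matrix (Fin D) (Fin D) ℤ) : Prop :=
  C.det ≠ 0 ∧ ∀ i, ∃ Q : Matrix (Fin D) (Fin D) ℤ, C = Q * M i

/-- `C` is a least common left multiple (lclm) of the family `M`. -/
def IsLCLM {D n : ℕ} (M : Fin n → Matrix (Fin D) (Fin D) ℤ)
    (C : Matrix (Fin D) (Fin D) ℤ) : Prop :=
  IsCLM M C ∧ ∀ C', IsCLM M C' → ∃ P : Matrix (Fin D) (Fin D) ℤ, C' = P * C

/-- `B` is a common left divisor (cld) of the family `M`. -/
def IsCLD {D n : ℕ} (M : Fin n → Matrix (Fin D) (Fin D) ℤ)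
    (B : Matrix (Fin D) (Fin D) ℤ) : Prop :=
  B.det ≠ 0 ∧ ∀ i, ∃ K : Matrix (Fin D) (Fin D) ℤ, M i = B * K

/-- `B` is a greatest common left divisor (gcld) of the family `M`:
`B` is a cld, and every cld of the family is a left divisor of `B`. -/
def IsGCLD {D n : ℕ} (M : Fin n → Matrix (Fin D) (Fin D) ℤ)
    (B : Matrix (Fin D) (Fin D) ℤ) : Prop :=
  IsCLD M B ∧ ∀ B', IsCLD M B' → ∃ K : Matrix (Fin D) (Fin D) ℤ, B = B' * K

/-- `A` and `B` are left coprime: every (nonsingular) common left divisor is unimodular. -/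
def LeftCoprime {D : ℕ} (A B : Matrix (Fin D) (Fin D) ℤ) : Prop :=
  ∀ C : Matrix (Fin D) (Fin D) ℤ, C.det ≠ 0 →
    (∃ K, A = C * K) → (∃ K, B = C * K) → Unimod C

/-- `A` and `B` are right coprime: every (nonsingular) common right divisor is unimodular. -/
def RightCoprime {D : ℕ} (A B : Matrix (Fin D) (Fin D) ℤ) : Prop :=
  ∀ C : Matrix (Fin D) (Fin D) ℤ, C.det ≠ 0 →
    (∃ K, A = K * C) → (∃ K, B = K * C) → Unimod C

/-- `A` and `B` are coprime (for commuting matrices left and right coprimeness coincide). -/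
def MatCoprime {D : ℕ} (A B : Matrix (Fin D) (Fin D) ℤ) : Prop :=
  LeftCoprime A B ∧ RightCoprime A B

/-- The lattice generated by an integer matrix `M`: all integer combinations `M n`. -/
def LAT {D : ℕ} (M : Matrix (Fin D) (Fin D) ℤ) : Set (Fin D → ℤ) :=
  {v | ∃ n : Fin D → ℤ, v = M.mulVec n}

/-- `𝒩(M)`: the integer vectors of the form `M x` with `x ∈ [0,1)^D`. -/
def NSet {D : ℕ} (M : Matrix (Fin D) (Fin D) ℤ) : Set (Fin D → ℤ) :=
  {k | ∃ x : Fin D → ℚ, (∀ j, 0 ≤ x j ∧ x j < 1) ∧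
      (M.map (Int.cast : ℤ → ℚ)).mulVec x = fun j => (k j : ℚ)}

/-- `r` is the remainder of `m` modulo `M`: `r ∈ 𝒩(M)` and `m − r ∈ LAT(M)`. -/
def IsRem {D : ℕ} (M : Matrix (Fin D) (Fin D) ℤ) (m r : Fin D → ℤ) : Prop :=
  r ∈ NSet M ∧ (m - r) ∈ LAT M

/-- The Euclidean norm on `ℝ^D`. -/
noncomputable def euclNorm {D : ℕ} (v : Fin D → ℝ) : ℝ := Real.sqrt (∑ j, (v j) ^ 2)

/-- The lattice generated by a real matrix `M`: all integer combinations `M n`. -/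
def LATR {D : ℕ} (M : Matrix (Fin D) (Fin D) ℝ) : Set (Fin D → ℝ) :=
  {v | ∃ n : Fin D → ℤ, v = M.mulVec (fun j => (n j : ℝ))}

abbrev MatD (D : ℕ) := Matrix (Fin D) (Fin D) ℤ




/-- mulVecLin is injective when det ≠ 0. -/
lemma aux_mulVecLin_inj {D : ℕ} {A : MatD D} (hA : A.det ≠ 0) :
    Function.Injective A.mulVecLin := by
  rw [← LinearMap.ker_eq_bot, Submodule.eq_bot_iff]
  intro v hv
  by_contra h
  exact hA (Matrix.exists_mulVec_eq_zero_iff.mp ⟨v, h, hv⟩)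

/-- Bézout identity from left coprimeness. -/
lemma aux_bezout_left {D : ℕ} {A B : MatD D} (hA : A.det ≠ 0) (hB : B.det ≠ 0)
    (h : ∀ C : MatD D, C.det ≠ 0 → (∃ K, A = C * K) → (∃ K, B = C * K) →
      C.det = 1 ∨ C.det = -1) :
    ∃ X Y : MatD D, A * X + B * Y = 1 := by
  classical
  set Λ : Submodule ℤ (Fin D → ℤ) :=
    LinearMap.range A.mulVecLin ⊔ LinearMap.range B.mulVecLin with hΛ
  obtain ⟨n, b0⟩ := Submodule.basisOfPid (Pi.basisFun ℤ (Fin D)) Λ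
  haveI : Module.Finite ℤ Λ := Module.Finite.of_basis b0
  have hfr : Module.finrank ℤ Λ = n := Module.finrank_eq_card_basis b0 |>.trans (by simp)
  have hle : Module.finrank ℤ Λ ≤ D :=
    le_trans (Submodule.finrank_le Λ) (le_of_eq (Module.finrank_fin_fun ℤ))
  have hge : D ≤ Module.finrank ℤ Λ := by
    have h1 : Module.finrank ℤ (LinearMap.range A.mulVecLin) = D := by
      rw [LinearMap.finrank_range_of_inj (aux_mulVecLin_inj hA)]
      exact Module.finrank_fin_fun ℤ
    calc D = Module.finrank ℤ (LinearMap.range A.mulVecLin) := h1.symm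
      _ ≤ Module.finrank ℤ Λ := Submodule.finrank_mono le_sup_left
  have hnD : n = D := by omega
  let b : Module.Basis (Fin D) ℤ Λ := b0.reindex (finCongr hnD)
  -- the matrix whose columns are the basis vectors
  let G : MatD D := Matrix.of fun i j => (b j : Fin D → ℤ) i
  -- every element of Λ equals G.mulVec of its coordinates
  have hGv : ∀ v : Λ, G.mulVec (fun j => b.repr v j) = (v : Fin D → ℤ) := by
    intro v
    funext i
    have hv := b.sum_repr v
    have : ((∑ j, b.repr v j • b j : Λ) : Fin D → ℤ) i
        = ∑ j, b.repr v j * (b j : Fin D → ℤ) i := by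
      rw [show ((∑ j, b.repr v j • b j : Λ) : Fin D → ℤ)
          = ∑ j, b.repr v j • (b j : Fin D → ℤ) by push_cast; rfl]
      simp [Finset.sum_apply]
    rw [Matrix.mulVec, dotProduct]
    rw [← hv, this]
    simp [G, mul_comm]
  -- columns of A and B lie in Λ
  have hcolA : ∀ j, (fun i => A i j) ∈ Λ := by
    intro j
    refine Submodule.mem_sup_left ⟨Pi.single j 1, ?_⟩
    simp [Matrix.mulVecLin, Matrix.mulVec_single]
    rfl
  have hcolB : ∀ j, (fun i => B i j) ∈ Λ := by
    intro j
    refine Submodule.mem_sup_right ⟨Pi.single j 1, ?_⟩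
    simp [Matrix.mulVecLin, Matrix.mulVec_single]
    rfl
  -- G left-divides A and B
  have hdiv : ∀ (M : MatD D), (∀ j, (fun i => M i j) ∈ Λ) → ∃ K, M = G * K := by
    intro M hM
    refine ⟨Matrix.of fun k j => b.repr ⟨fun i => M i j, hM j⟩ k, ?_⟩
    ext i j
    have := congrFun (hGv ⟨fun i => M i j, hM j⟩) i
    rw [Matrix.mul_apply]
    simpa [Matrix.mulVec, dotProduct] using this.symm
  obtain ⟨KA, hKA⟩ := hdiv A hcolA
  obtain ⟨KB, hKB⟩ := hdiv B hcolB
  have hGdet : G.det ≠ 0 := by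
    intro h0
    apply hA
    rw [hKA, Matrix.det_mul, h0, zero_mul]
  have hGuni : G.det = 1 ∨ G.det = -1 := h G hGdet ⟨KA, hKA⟩ ⟨KB, hKB⟩
  have hGunit : IsUnit G.det := by
    rcases hGuni with h1 | h1
    · rw [h1]; exact isUnit_one
    · rw [h1]; exact isUnit_one.neg
  -- columns of G are combinations of columns of A and B
  have hcolG : ∀ j, ∃ x y : Fin D → ℤ,
      (fun i => G i j) = A.mulVec x + B.mulVec y := by
    intro j
    have hmem : (b j : Fin D → ℤ) ∈
        LinearMap.range A.mulVecLin ⊔ LinearMap.range B.mulVecLin := (b j).2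
    obtain ⟨u, ⟨x, hx⟩, w, ⟨y, hy⟩, huw⟩ := Submodule.mem_sup.mp hmem
    refine ⟨x, y, ?_⟩
    have heq : A.mulVec x + B.mulVec y = (b j : Fin D → ℤ) := by
      rw [← huw, ← hx, ← hy]; rfl
    exact heq.symm
  choose xs ys hxy using hcolG
  set X0 : MatD D := Matrix.of fun i j => xs j i with hX0
  set Y0 : MatD D := Matrix.of fun i j => ys j i with hY0
  have hG : G = A * X0 + B * Y0 := by
    ext i j
    have := congrFun (hxy j) i
    simpa [Matrix.mul_apply, Matrix.mulVec, dotProduct, X0, Y0] using this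
  refine ⟨X0 * G⁻¹, Y0 * G⁻¹, ?_⟩
  have := Matrix.mul_nonsing_inv G hGunit
  calc A * (X0 * G⁻¹) + B * (Y0 * G⁻¹) = (A * X0 + B * Y0) * G⁻¹ := by rw [add_mul, Matrix.mul_assoc, Matrix.mul_assoc]
    _ = G * G⁻¹ := by rw [← hG]
    _ = 1 := this


/-- Bézout with left multipliers, from right coprimeness. -/
lemma aux_bezout_right {D : ℕ} {A B : MatD D} (hA : A.det ≠ 0) (hB : B.det ≠ 0)
    (h : ∀ C : MatD D, C.det ≠ 0 → (∃ K, A = K * C) → (∃ K, B = K * C) →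
      C.det = 1 ∨ C.det = -1) :
    ∃ X Y : MatD D, X * A + Y * B = 1 := by
  have hA' : Aᵀ.det ≠ 0 := by rwa [Matrix.det_transpose]
  have hB' : Bᵀ.det ≠ 0 := by rwa [Matrix.det_transpose]
  obtain ⟨X, Y, hXY⟩ := aux_bezout_left hA' hB' (fun C hC ⟨K, hK⟩ ⟨K', hK'⟩ => by
    have h1 : A = Kᵀ * Cᵀ := by
      have := congrArg Matrix.transpose hK
      simpa [Matrix.transpose_mul] using this
    have h2 : B = K'ᵀ * Cᵀ := by
      have := congrArg Matrix.transpose hK'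
      simpa [Matrix.transpose_mul] using this
    have := h Cᵀ (by rwa [Matrix.det_transpose]) ⟨Kᵀ, h1⟩ ⟨K'ᵀ, h2⟩
    rwa [Matrix.det_transpose] at this)
  refine ⟨Xᵀ, Yᵀ, ?_⟩
  have := congrArg Matrix.transpose hXY
  simpa [Matrix.transpose_add, Matrix.transpose_mul] using this

/-- Division: if C is a common right multiple of commuting A, B with a Bézout identity,
then A*B right-divides... i.e. C = A*B*P. -/
lemma aux_div2 {D : ℕ} {A B C X Y Qa Qb : MatD D} (hA : A.det ≠ 0) (hB : B.det ≠ 0)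
    (hAB : A * B = B * A) (hbez : X * A + Y * B = 1)
    (ha : C = A * Qa) (hb : C = B * Qb) :
    C = A * B * (X * Qb + Y * Qa) := by
  classical
  set φ : MatD D →+* Matrix (Fin D) (Fin D) ℚ := (Int.castRingHom ℚ).mapMatrix with hφ
  have hinj : Function.Injective φ := fun M M' hMM => by
    ext i j
    have h2 : φ M i j = φ M' i j := by rw [hMM]
    simp only [hφ, RingHom.mapMatrix_apply, Matrix.map_apply, eq_intCast] at h2
    exact_mod_cast h2
  apply hinj
  rw [_root_.map_mul, _root_.map_mul, _root_.map_add, _root_.map_mul, _root_.map_mul]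
  set A' := φ A; set B' := φ B; set C' := φ C
  set X' := φ X; set Y' := φ Y; set Qa' := φ Qa; set Qb' := φ Qb
  have hdetA : IsUnit A'.det := by
    have : A'.det = (A.det : ℚ) := ((Int.castRingHom ℚ).map_det A).symm
    rw [this]
    exact isUnit_iff_ne_zero.mpr (by exact_mod_cast hA)
  have hdetB : IsUnit B'.det := by
    have : B'.det = (B.det : ℚ) := ((Int.castRingHom ℚ).map_det B).symm
    rw [this]
    exact isUnit_iff_ne_zero.mpr (by exact_mod_cast hB)
  have hAB' : A' * B' = B' * A' := by rw [← _root_.map_mul, ← _root_.map_mul, hAB]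
  have hbez' : X' * A' + Y' * B' = 1 := by
    rw [← _root_.map_mul, ← _root_.map_mul, ← _root_.map_add, hbez, _root_.map_one]
  have ha' : C' = A' * Qa' := by rw [← _root_.map_mul]; exact congrArg φ ha
  have hb' : C' = B' * Qb' := by rw [← _root_.map_mul]; exact congrArg φ hb
  haveI : Invertible A' := A'.invertibleOfIsUnitDet hdetA
  haveI : Invertible B' := B'.invertibleOfIsUnitDet hdetB
  have hcomm1 : B' * ⅟A' = ⅟A' * B' :=
    ((show Commute A' B' from hAB').invOf_left).eq.symm
  have hQa' : Qa' = ⅟A' * C' := by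
    rw [ha', ← Matrix.mul_assoc, invOf_mul_self, Matrix.one_mul]
  have hQb' : Qb' = ⅟B' * C' := by
    rw [hb', ← Matrix.mul_assoc, invOf_mul_self, Matrix.one_mul]
  have key : X' * Qb' + Y' * Qa' = ⅟A' * (⅟B' * C') := by
    calc X' * Qb' + Y' * Qa'
        = (X' * A' + Y' * B') * (⅟A' * (⅟B' * C')) := by
          rw [add_mul]
          congr 1
          · rw [Matrix.mul_assoc X' A' _, ← Matrix.mul_assoc A' (⅟A') _, mul_invOf_self,
              Matrix.one_mul, hQb']
          · rw [Matrix.mul_assoc Y' B' _, ← Matrix.mul_assoc B' (⅟A') _, hcomm1,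
              Matrix.mul_assoc (⅟A') B' _, ← Matrix.mul_assoc B' (⅟B') _, mul_invOf_self,
              Matrix.one_mul, hQa']
      _ = ⅟A' * (⅟B' * C') := by rw [hbez', Matrix.one_mul]
  rw [key]
  symm
  calc A' * B' * (⅟A' * (⅟B' * C'))
      = B' * A' * (⅟A' * (⅟B' * C')) := by rw [hAB']
    _ = B' * (A' * ⅟A') * (⅟B' * C') := by
        rw [Matrix.mul_assoc B' A' _, ← Matrix.mul_assoc A' (⅟A') _,
          ← Matrix.mul_assoc B' _ _]
    _ = C' := by rw [mul_invOf_self, Matrix.mul_one, ← Matrix.mul_assoc,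
        mul_invOf_self, Matrix.one_mul]


/-- extend Bézout along products (left-multiplier version). -/
lemma aux_bez_ext {D : ℕ} {A B B' X1 Y1 X2 Y2 : MatD D}
    (h1 : X1 * A + Y1 * B = 1) (h2 : X2 * A + Y2 * B' = 1)
    (hAB : A * B = B * A) (hBB' : B' * B = B * B') :
    ∃ X Y : MatD D, X * A + Y * (B * B') = 1 := by
  refine ⟨X1 + Y1 * (X2 * B), Y1 * Y2, ?_⟩
  have hB2 : B = X2 * (B * A) + Y2 * (B * B') := by
    calc B = (X2 * A + Y2 * B') * B := by rw [h2, one_mul]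
      _ = X2 * (A * B) + Y2 * (B' * B) := by noncomm_ring
      _ = X2 * (B * A) + Y2 * (B * B') := by rw [hAB, hBB']
  calc (X1 + Y1 * (X2 * B)) * A + (Y1 * Y2) * (B * B')
      = X1 * A + Y1 * (X2 * (B * A) + Y2 * (B * B')) := by noncomm_ring
    _ = X1 * A + Y1 * B := by rw [← hB2]
    _ = 1 := h1

/-- extend Bézout along products (right-multiplier version). -/
lemma aux_bez_extL {D : ℕ} {A B B' X1 Y1 X2 Y2 : MatD D}
    (h1 : A * X1 + B * Y1 = 1) (h2 : A * X2 + B' * Y2 = 1)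
    (hAB : A * B = B * A) :
    ∃ X Y : MatD D, A * X + (B * B') * Y = 1 := by
  refine ⟨X1 + B * X2 * Y1, Y2 * Y1, ?_⟩
  have hB2 : B = (A * B) * X2 + (B * B') * Y2 := by
    calc B = B * (A * X2 + B' * Y2) := by rw [h2, mul_one]
      _ = (B * A) * X2 + (B * B') * Y2 := by noncomm_ring
      _ = (A * B) * X2 + (B * B') * Y2 := by rw [← hAB]
  calc A * (X1 + B * X2 * Y1) + (B * B') * (Y2 * Y1)
      = A * X1 + ((A * B) * X2 + (B * B') * Y2) * Y1 := by noncomm_ring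
    _ = A * X1 + B * Y1 := by rw [← hB2]
    _ = 1 := h1

/-- Bézout of a matrix against a product of a commuting list. -/
lemma aux_bez_list {D : ℕ} (a : MatD D) :
    ∀ t : List (MatD D), (∀ x ∈ t, a * x = x * a) →
      t.Pairwise (fun P Q => P * Q = Q * P) →
      (∀ x ∈ t, ∃ X Y : MatD D, X * a + Y * x = 1) →
      ∃ X Y : MatD D, X * a + Y * t.prod = 1 := by
  intro t
  induction t with
  | nil => exact fun _ _ _ => ⟨0, 1, by simp⟩
  | cons b t' ih =>
    intro hcm hpc hbz
    obtain ⟨X1, Y1, h1⟩ := hbz b (List.mem_cons_self)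
    obtain ⟨X2, Y2, h2⟩ := ih (fun x hx => hcm x (List.mem_cons_of_mem b hx))
      (List.Pairwise.sublist (List.sublist_cons_self b t') hpc)
      (fun x hx => hbz x (List.mem_cons_of_mem b hx))
    have hBB' : t'.prod * b = b * t'.prod := by
      have : Commute b t'.prod := Commute.list_prod_right _ _
        (fun x hx => (List.pairwise_cons.mp hpc).1 x hx)
      exact this.eq.symm
    obtain ⟨X, Y, hXY⟩ := aux_bez_ext h1 h2 (hcm b (List.mem_cons_self)) hBB'
    exact ⟨X, Y, by rw [List.prod_cons]; exact hXY⟩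

/-- Same, right-multiplier version. -/
lemma aux_bez_listL {D : ℕ} (a : MatD D) :
    ∀ t : List (MatD D), (∀ x ∈ t, a * x = x * a) →
      (∀ x ∈ t, ∃ X Y : MatD D, a * X + x * Y = 1) →
      ∃ X Y : MatD D, a * X + t.prod * Y = 1 := by
  intro t
  induction t with
  | nil => exact fun _ _ => ⟨0, 1, by simp⟩
  | cons b t' ih =>
    intro hcm hbz
    obtain ⟨X1, Y1, h1⟩ := hbz b (List.mem_cons_self)
    obtain ⟨X2, Y2, h2⟩ := ih (fun x hx => hcm x (List.mem_cons_of_mem b hx))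
      (fun x hx => hbz x (List.mem_cons_of_mem b hx))
    obtain ⟨X, Y, hXY⟩ := aux_bez_extL h1 h2 (hcm b (List.mem_cons_self))
    exact ⟨X, Y, by rw [List.prod_cons]; exact hXY⟩

/-- mirror of aux_div2. -/
lemma aux_div2L {D : ℕ} {A B C X Y Qa Qb : MatD D} (hA : A.det ≠ 0) (hB : B.det ≠ 0)
    (hAB : A * B = B * A) (hbez : A * X + B * Y = 1)
    (ha : C = Qa * A) (hb : C = Qb * B) :
    ∃ P : MatD D, C = P * (A * B) := by
  have hA' : Aᵀ.det ≠ 0 := by rwa [Matrix.det_transpose]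
  have hB' : Bᵀ.det ≠ 0 := by rwa [Matrix.det_transpose]
  have hAB' : Aᵀ * Bᵀ = Bᵀ * Aᵀ := by
    rw [← Matrix.transpose_mul, ← Matrix.transpose_mul, hAB]
  have hbez' : Xᵀ * Aᵀ + Yᵀ * Bᵀ = 1 := by
    rw [← Matrix.transpose_mul, ← Matrix.transpose_mul, ← Matrix.transpose_add, hbez,
      Matrix.transpose_one]
  have ha' : Cᵀ = Aᵀ * Qaᵀ := by rw [← Matrix.transpose_mul, ha]
  have hb' : Cᵀ = Bᵀ * Qbᵀ := by rw [← Matrix.transpose_mul, hb]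
  have h := aux_div2 hA' hB' hAB' hbez' ha' hb'
  refine ⟨(Xᵀ * Qbᵀ + Yᵀ * Qaᵀ)ᵀ, ?_⟩
  have := congrArg Matrix.transpose h
  rw [Matrix.transpose_transpose, Matrix.transpose_mul] at this
  rw [this, Matrix.transpose_mul, Matrix.transpose_transpose, Matrix.transpose_transpose,
    hAB]

/-- master lemma, lcrm version. -/
lemma aux_master {D : ℕ} :
    ∀ l : List (MatD D), (∀ M ∈ l, M.det ≠ 0) →
      l.Pairwise (fun P Q => P * Q = Q * P) →
      l.Pairwise (fun P Q => ∃ X Y : MatD D, X * P + Y * Q = 1) →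
      l.prod.det ≠ 0 ∧ (∀ M ∈ l, ∃ Q, l.prod = M * Q) ∧
        (∀ C : MatD D, C.det ≠ 0 → (∀ M ∈ l, ∃ Q, C = M * Q) →
          ∃ P, C = l.prod * P) := by
  intro l
  induction l with
  | nil =>
    refine fun _ _ _ => ⟨by simp, by simp, fun C _ _ => ⟨C, by simp⟩⟩
  | cons a t ih =>
    intro hd hc hz
    have hda : a.det ≠ 0 := hd a (List.mem_cons_self)
    have hct := List.Pairwise.sublist (List.sublist_cons_self a t) hc
    have hzt := List.Pairwise.sublist (List.sublist_cons_self a t) hz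
    have hdt : ∀ M ∈ t, M.det ≠ 0 := fun M hM => hd M (List.mem_cons_of_mem a hM)
    obtain ⟨ihd, ihm, ihmin⟩ := ih hdt hct hzt
    have hacm : ∀ x ∈ t, a * x = x * a := fun x hx => (List.pairwise_cons.mp hc).1 x hx
    have haB : a * t.prod = t.prod * a :=
      (Commute.list_prod_right _ _ (fun x hx => hacm x hx)).eq
    refine ⟨?_, ?_, ?_⟩
    · rw [List.prod_cons, Matrix.det_mul]
      exact mul_ne_zero hda ihd
    · intro M hM
      rcases List.mem_cons.mp hM with h | h
      · exact ⟨t.prod, by rw [List.prod_cons, h]⟩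
      · obtain ⟨Q, hQ⟩ := ihm M h
        refine ⟨a * Q, ?_⟩
        rw [List.prod_cons, hQ, ← Matrix.mul_assoc, ← Matrix.mul_assoc,
          hacm M h]
    · intro C hC hdiv
      obtain ⟨Qa, hQa⟩ := hdiv a (List.mem_cons_self)
      obtain ⟨Qb, hQb⟩ := ihmin C hC (fun M hM => hdiv M (List.mem_cons_of_mem a hM))
      obtain ⟨X, Y, hXY⟩ := aux_bez_list a t hacm hct
        (fun x hx => (List.pairwise_cons.mp hz).1 x hx)
      refine ⟨X * Qb + Y * Qa, ?_⟩
      rw [List.prod_cons]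
      exact aux_div2 hda ihd haB hXY hQa hQb

/-- master lemma, lclm version. -/
lemma aux_masterL {D : ℕ} :
    ∀ l : List (MatD D), (∀ M ∈ l, M.det ≠ 0) →
      l.Pairwise (fun P Q => P * Q = Q * P) →
      l.Pairwise (fun P Q => ∃ X Y : MatD D, P * X + Q * Y = 1) →
      l.prod.det ≠ 0 ∧ (∀ M ∈ l, ∃ Q, l.prod = Q * M) ∧
        (∀ C : MatD D, C.det ≠ 0 → (∀ M ∈ l, ∃ Q, C = Q * M) →
          ∃ P, C = P * l.prod) := by
  intro l
  induction l with
  | nil =>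
    refine fun _ _ _ => ⟨by simp, by simp, fun C _ _ => ⟨C, by simp⟩⟩
  | cons a t ih =>
    intro hd hc hz
    have hda : a.det ≠ 0 := hd a (List.mem_cons_self)
    have hct := List.Pairwise.sublist (List.sublist_cons_self a t) hc
    have hzt := List.Pairwise.sublist (List.sublist_cons_self a t) hz
    have hdt : ∀ M ∈ t, M.det ≠ 0 := fun M hM => hd M (List.mem_cons_of_mem a hM)
    obtain ⟨ihd, ihm, ihmin⟩ := ih hdt hct hzt
    have hacm : ∀ x ∈ t, a * x = x * a := fun x hx => (List.pairwise_cons.mp hc).1 x hx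
    have haB : a * t.prod = t.prod * a :=
      (Commute.list_prod_right _ _ (fun x hx => hacm x hx)).eq
    refine ⟨?_, ?_, ?_⟩
    · rw [List.prod_cons, Matrix.det_mul]
      exact mul_ne_zero hda ihd
    · intro M hM
      rcases List.mem_cons.mp hM with h | h
      · exact ⟨t.prod, by rw [List.prod_cons, h, ← haB]⟩
      · obtain ⟨Q, hQ⟩ := ihm M h
        refine ⟨a * Q, ?_⟩
        rw [List.prod_cons, hQ, ← Matrix.mul_assoc]
    · intro C hC hdiv
      obtain ⟨Qa, hQa⟩ := hdiv a (List.mem_cons_self)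
      obtain ⟨Qb, hQb⟩ := ihmin C hC (fun M hM => hdiv M (List.mem_cons_of_mem a hM))
      obtain ⟨X, Y, hXY⟩ := aux_bez_listL a t hacm
        (fun x hx => (List.pairwise_cons.mp hz).1 x hx)
      obtain ⟨P, hP⟩ := aux_div2L hda ihd haB hXY hQa hQb
      exact ⟨P, by rw [List.prod_cons]; exact hP⟩

/-- the product over a subset (of size ≥ 2) of a pairwise commutative and
coprime family is both an lcrm and an lclm of the members of the subset. -/
theorem stmt5 {D L : ℕ} (N : Fin L → Matrix (Fin D) (Fin D) ℤ)
    (hns : ∀ i, (N i).det ≠ 0)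
    (hcomm : ∀ i j, N i * N j = N j * N i)
    (hcop : ∀ i j, i ≠ j → MatCoprime (N i) (N j))
    (s : List (Fin L)) (hs : s.Nodup) (hp : 2 ≤ s.length) :
    IsLCRM (fun k : Fin s.length => N (s.get k)) ((s.map N).prod) ∧
      IsLCLM (fun k : Fin s.length => N (s.get k)) ((s.map N).prod) := by
  classical
  have hld : ∀ M ∈ s.map N, M.det ≠ 0 := by
    intro M hM
    obtain ⟨i, _, rfl⟩ := List.mem_map.mp hM
    exact hns i
  have hlc : (s.map N).Pairwise (fun P Q => P * Q = Q * P) :=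
    List.Pairwise.map N (fun i j _ => hcomm i j) hs
  have hlzR : (s.map N).Pairwise (fun P Q => ∃ X Y : MatD D, X * P + Y * Q = 1) :=
    List.Pairwise.map N (fun i j hij =>
      aux_bezout_right (hns i) (hns j)
        (fun C hC h1 h2 => (hcop i j hij).2 C hC h1 h2)) hs
  have hlzL : (s.map N).Pairwise (fun P Q => ∃ X Y : MatD D, P * X + Q * Y = 1) :=
    List.Pairwise.map N (fun i j hij =>
      aux_bezout_left (hns i) (hns j)
        (fun C hC h1 h2 => (hcop i j hij).1 C hC h1 h2)) hs
  obtain ⟨hdR, hmR, hminR⟩ := aux_master (s.map N) hld hlc hlzR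
  obtain ⟨hdL, hmL, hminL⟩ := aux_masterL (s.map N) hld hlc hlzL
  have hmem : ∀ k : Fin s.length, N (s.get k) ∈ s.map N :=
    fun k => List.mem_map.mpr ⟨s.get k, List.get_mem s k, rfl⟩
  constructor
  · refine ⟨⟨hdR, fun k => hmR _ (hmem k)⟩, ?_⟩
    rintro C' ⟨hC', hQ⟩
    refine hminR C' hC' ?_
    intro M hM
    obtain ⟨i, hi, rfl⟩ := List.mem_map.mp hM
    obtain ⟨k, hk⟩ := List.mem_iff_get.mp hi
    obtain ⟨Q, hQ'⟩ := hQ k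
    exact ⟨Q, by rw [← hk]; exact hQ'⟩
  · refine ⟨⟨hdL, fun k => hmL _ (hmem k)⟩, ?_⟩
    rintro C' ⟨hC', hQ⟩
    refine hminL C' hC' ?_
    intro M hM
    obtain ⟨i, hi, rfl⟩ := List.mem_map.mp hM
    obtain ⟨k, hk⟩ := List.mem_iff_get.mp hi
    obtain ⟨Q, hQ'⟩ := hQ k
    exact ⟨Q, by rw [← hk]; exact hQ'⟩
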